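/- Let p = b·X + c be a linear cycle (b ≠ 0) and R the hyperplane reflection defined by p in the space of cycles. For any w ∈ E, R maps the zero circle q(X) = X·X − 2w·X + w·w to the zero circle centered at w' = w − 2b·(p(w)/(b·b)), i.e., R(q)(X) = X·X − 2w'·X + w'·w'. Thus the action of R on zero circles coincides with the affine reflection across the hyperplane Z(p). -/

import Mathlib

/-- For a linear cycle `p = b·X + c` (`b ≠ 0`), the hyperplane reflection `R` defined by
`p` maps the zero circle at `w` to the zero circle at
`w' = w − 2(p(w)/(b·b))·b`, i.e. `R` acts on zero circles as the affine reflection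
across the hyperplane `Z(p)`. -/
theorem stmt_11 {k : Type*} [Field k] (hchar : (2 : k) ≠ 0)
    {E : Type*} [AddCommGroup E] [Module k E]
    (B : LinearMap.BilinForm k E) (hB : B.IsSymm)
    (haniso : ∀ x : E, B x x = 0 → x = 0)
    (cyc : (k × E × k) → (k × E × k) → k)
    (hcyc : ∀ p q : k × E × k,
      cyc p q = B p.2.1 q.2.1 - 2 * p.1 * q.2.2 - 2 * q.1 * p.2.2)
    (b : E) (c : k) (hb : b ≠ 0) (w : E)
    (p q : k × E × k)
    (hp : p = ((0 : k), b, c))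
    (hq : q = ((1 : k), -((2 : k) • w), B w w))
    (w' : E) (hw' : w' = w - ((2 * (B b w + c)) / (B b b)) • b) :
    q - (2 * (cyc q p / cyc p p)) • p = ((1 : k), -((2 : k) • w'), B w' w') := by
  have hBbb : B b b ≠ 0 := fun h => hb (haniso b h)
  have hsym : B w b = B b w := hB.eq w b
  subst hp hq hw'
  rw [hcyc, hcyc]
  simp only [map_neg, map_smul, LinearMap.neg_apply, LinearMap.smul_apply,
    map_sub, LinearMap.sub_apply, smul_eq_mul, hsym]
  have hscal : 2 * ((-(2 * B b w) - 2 * 1 * c - 2 * 0 * B w w) /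
      (B b b - 2 * 0 * c - 2 * 0 * c)) = -(2 * (2 * (B b w + c) / B b b)) := by
    field_simp
    ring_nf
    simp only [mul_inv_cancel_right₀ hBbb]
  refine Prod.ext ?_ (Prod.ext ?_ ?_)
  · simp
  · simp only [Prod.snd, Prod.fst, Prod.smul_mk, Prod.mk_sub_mk, hscal]
    simp only [neg_smul, sub_neg_eq_add, smul_sub, smul_smul, smul_neg]
    module
  · simp only [Prod.snd, Prod.fst, Prod.smul_mk, Prod.mk_sub_mk, smul_eq_mul, hscal]
    field_simp
    ring
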